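/- arXiv:math/9405201 — 2 statements merged into one kernel-verified Lean document; each statement's English description precedes it below -/
import Mathlib

section
/- Let 0 < r < 1 and 0 < a < 1/(2^{1/r} + 2). If A ⊆ [0,a] and B ⊆ [1−a, 1], then H^r(A ∪ B) = H^r(A) + H^r(B). -/
open MeasureTheory Set ENNReal

/-- The `r`-Hausdorff capacity of a set `X ⊆ ℝ`: the infimum of `∑ λ(I i)^r`
over all countable covers of `X` by closed intervals. -/
noncomputable def Hcap (r : ℝ) (X : Set ℝ) : ℝ≥0∞ :=
  ⨅ (I : ℕ → Set ℝ) (_ : ∀ i, ∃ a b : ℝ, I i = Set.Icc a b) (_ : X ⊆ ⋃ i, I i),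
    ∑' i, (volume (I i)) ^ r

lemma Hcap_le (r : ℝ) (X : Set ℝ) (I : ℕ → Set ℝ)
    (h1 : ∀ i, ∃ a b : ℝ, I i = Set.Icc a b) (h2 : X ⊆ ⋃ i, I i) :
    Hcap r X ≤ ∑' i, (volume (I i)) ^ r := by
  refine iInf_le_of_le I (iInf_le_of_le h1 (iInf_le_of_le h2 le_rfl))

theorem hausdorff_capacity_additive_far_apart (r : ℝ) (hr0 : 0 < r) (hr1 : r < 1)
    (a : ℝ) (ha0 : 0 < a) (ha : a < 1 / ((2 : ℝ) ^ (1 / r) + 2))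
    (A B : Set ℝ) (hA : A ⊆ Set.Icc 0 a) (hB : B ⊆ Set.Icc (1 - a) 1) :
    Hcap r (A ∪ B) = Hcap r A + Hcap r B := by
  classical
  -- basic real inequalities
  have h2p : (0 : ℝ) < (2 : ℝ) ^ (1 / r) := Real.rpow_pos_of_pos two_pos _
  have hd : (0 : ℝ) < (2 : ℝ) ^ (1 / r) + 2 := by linarith
  have hmul : a * ((2 : ℝ) ^ (1 / r) + 2) < 1 := (lt_div_iff₀ hd).mp ha
  have hsep : (2 : ℝ) ^ (1 / r) * a < 1 - 2 * a := by nlinarith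
  have hpos : (0 : ℝ) < 1 - 2 * a := by nlinarith
  have key : 2 * a ^ r ≤ (1 - 2 * a) ^ r := by
    have h1 : ((2 : ℝ) ^ (1 / r) * a) ^ r ≤ (1 - 2 * a) ^ r :=
      Real.rpow_le_rpow (by positivity) hsep.le hr0.le
    have h2 : ((2 : ℝ) ^ (1 / r) * a) ^ r = 2 * a ^ r := by
      rw [Real.mul_rpow h2p.le ha0.le, ← Real.rpow_mul (by norm_num : (0:ℝ) ≤ 2),
        one_div_mul_cancel hr0.ne', Real.rpow_one]
    linarith
  refine le_antisymm ?_ ?_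
  · -- subadditivity: interleave covers
    have main : ∀ (J : ℕ → Set ℝ), (∀ i, ∃ a b : ℝ, J i = Set.Icc a b) → A ⊆ ⋃ i, J i →
        ∀ (K : ℕ → Set ℝ), (∀ i, ∃ a b : ℝ, K i = Set.Icc a b) → B ⊆ ⋃ i, K i →
        Hcap r (A ∪ B) ≤ (∑' i, (volume (J i)) ^ r) + ∑' i, (volume (K i)) ^ r := by
      intro J hJ1 hJ2 K hK1 hK2
      set I : ℕ → Set ℝ := fun n => if Even n then J (n / 2) else K (n / 2) with hI
      have hIe : ∀ k, I (2 * k) = J k := by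
        intro k
        simp [hI, Nat.mul_div_cancel_left k two_pos]
      have hIo : ∀ k, I (2 * k + 1) = K k := by
        intro k
        have : ¬ Even (2 * k + 1) := by simp [Nat.even_add_one, Nat.even_mul]
        simp [hI, this, Nat.mul_add_div two_pos]
      have h1 : ∀ i, ∃ a b : ℝ, I i = Set.Icc a b := by
        intro i
        by_cases h : Even i <;> simp only [hI, h, if_true, if_false] <;>
          [exact hJ1 _; skip] <;> exact hK1 _
      have h2 : A ∪ B ⊆ ⋃ i, I i := by
        rintro x (hx | hx)
        · obtain ⟨i, hi⟩ := mem_iUnion.mp (hJ2 hx)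
          exact mem_iUnion.mpr ⟨2 * i, by rw [hIe]; exact hi⟩
        · obtain ⟨i, hi⟩ := mem_iUnion.mp (hK2 hx)
          exact mem_iUnion.mpr ⟨2 * i + 1, by rw [hIo]; exact hi⟩
      refine le_trans (Hcap_le r (A ∪ B) I h1 h2) ?_
      have := tsum_even_add_odd (f := fun n => (volume (I n)) ^ r)
        ENNReal.summable ENNReal.summable
      rw [← this]
      apply le_of_eq
      congr 1
      · exact tsum_congr fun k => by show volume (I (2 * k)) ^ r = _; rw [hIe]
      · exact tsum_congr fun k => by show volume (I (2 * k + 1)) ^ r = _; rw [hIo]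
    conv_rhs => rw [Hcap, Hcap]
    simp only [ENNReal.iInf_add, ENNReal.add_iInf]
    refine le_iInf fun J => le_iInf fun hJ1 => le_iInf fun hJ2 => le_iInf fun K =>
      le_iInf fun hK1 => le_iInf fun hK2 => ?_
    exact main K hK1 hK2 J hJ1 hJ2
  · -- superadditivity: split a cover of A ∪ B
    rw [Hcap]
    refine le_iInf fun I => le_iInf fun h1 => le_iInf fun h2 => ?_
    set P : ℕ → Prop := fun i => (I i ∩ Set.Icc 0 a).Nonempty with hP
    set Q : ℕ → Prop := fun i => (I i ∩ Set.Icc (1 - a) 1).Nonempty with hQ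
    set J : ℕ → Set ℝ := fun i =>
      if P i ∧ Q i then Set.Icc 0 a else if P i then I i else Set.Icc 1 0 with hJ
    set K : ℕ → Set ℝ := fun i =>
      if P i ∧ Q i then Set.Icc (1 - a) 1 else if Q i then I i else Set.Icc 1 0 with hK
    have hJ1 : ∀ i, ∃ a b : ℝ, J i = Set.Icc a b := by
      intro i
      by_cases h : P i ∧ Q i
      · exact ⟨0, a, by simp [hJ, h]⟩
      · by_cases h' : P i
        · obtain ⟨b, c, hbc⟩ := h1 i
          have hq : ¬ Q i := fun hq => h ⟨h', hq⟩
          exact ⟨b, c, by simp [hJ, hq, h', hbc]⟩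
        · exact ⟨1, 0, by simp [hJ, h, h']⟩
    have hK1 : ∀ i, ∃ a b : ℝ, K i = Set.Icc a b := by
      intro i
      by_cases h : P i ∧ Q i
      · exact ⟨1 - a, 1, by simp [hK, h]⟩
      · by_cases h' : Q i
        · obtain ⟨b, c, hbc⟩ := h1 i
          have hp : ¬ P i := fun hp => h ⟨hp, h'⟩
          exact ⟨b, c, by simp [hK, hp, h', hbc]⟩
        · exact ⟨1, 0, by simp [hK, h, h']⟩
    have hJ2 : A ⊆ ⋃ i, J i := by
      intro x hx
      obtain ⟨i, hi⟩ := mem_iUnion.mp (h2 (Or.inl hx))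
      have hPi : P i := ⟨x, hi, hA hx⟩
      refine mem_iUnion.mpr ⟨i, ?_⟩
      by_cases h : Q i
      · simp [hJ, hPi, h, hA hx]
      · simp [hJ, hPi, h, hi]
    have hK2 : B ⊆ ⋃ i, K i := by
      intro x hx
      obtain ⟨i, hi⟩ := mem_iUnion.mp (h2 (Or.inr hx))
      have hQi : Q i := ⟨x, hi, hB hx⟩
      refine mem_iUnion.mpr ⟨i, ?_⟩
      by_cases h : P i
      · simp [hK, hQi, h, hB hx]
      · simp [hK, hQi, h, hi]
    have termwise : ∀ i, (volume (J i)) ^ r + (volume (K i)) ^ r ≤ (volume (I i)) ^ r := by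
      intro i
      have hz : (volume (Set.Icc (1 : ℝ) 0)) ^ r = 0 := by
        rw [Set.Icc_eq_empty (by norm_num : ¬ (1 : ℝ) ≤ 0)]
        simp [ENNReal.zero_rpow_of_pos hr0]
      by_cases h : P i ∧ Q i
      · obtain ⟨b, c, hbc⟩ := h1 i
        obtain ⟨x, hxI, hx0, hxa⟩ := h.1
        obtain ⟨y, hyI, hy1, hy2⟩ := h.2
        rw [hbc] at hxI hyI
        have hba : b ≤ a := le_trans hxI.1 hxa
        have hc1 : 1 - a ≤ c := le_trans hy1 hyI.2
        have hvol : volume (I i) = ENNReal.ofReal (c - b) := by rw [hbc, Real.volume_Icc]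
        have hJi : volume (J i) = ENNReal.ofReal a := by
          simp [hJ, h, Real.volume_Icc]
        have hKi : volume (K i) = ENNReal.ofReal a := by
          simp [hK, h, Real.volume_Icc]
        rw [hJi, hKi, hvol, ENNReal.ofReal_rpow_of_pos ha0,
          ENNReal.ofReal_rpow_of_pos (by linarith : (0:ℝ) < c - b),
          ← ENNReal.ofReal_add (by positivity) (by positivity)]
        apply ENNReal.ofReal_le_ofReal
        have : (1 - 2 * a) ^ r ≤ (c - b) ^ r :=
          Real.rpow_le_rpow hpos.le (by linarith) hr0.le
        linarith
      · by_cases h' : P i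
        · have hQi : ¬ Q i := fun hq => h ⟨h', hq⟩
          have : J i = I i := by simp [hJ, hQi, h']
          have hk : K i = Set.Icc 1 0 := by simp [hK, hQi]
          rw [this, hk, hz, add_zero]
        · have : J i = Set.Icc 1 0 := by simp [hJ, h, h']
          rw [this, hz, zero_add]
          by_cases h'' : Q i
          · have : K i = I i := by simp [hK, h', h'']
            rw [this]
          · have : K i = Set.Icc 1 0 := by simp [hK, h, h'']
            rw [this, hz]
            exact zero_le
    calc Hcap r A + Hcap r B ≤ (∑' i, (volume (J i)) ^ r) + ∑' i, (volume (K i)) ^ r :=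
          add_le_add (Hcap_le r A J hJ1 hJ2) (Hcap_le r B K hK1 hK2)
      _ = ∑' i, ((volume (J i)) ^ r + (volume (K i)) ^ r) := (ENNReal.tsum_add).symm
      _ ≤ ∑' i, (volume (I i)) ^ r := ENNReal.tsum_le_tsum termwise
end

section
/- Let D ⊆ [0,1] and δ, ε > 0 with δ < H^r(D). Suppose that for every set Z with λ(Z) < ε one has H^r(D \ Z) > H^r(D) − δ (i.e., Ξ_{δ,ε}(D,D) holds). Then there exists ε̄ > 0 such that for every set Z with λ(Z) < ε/2 one has H^r(D \ Z) > H^r(D) − (δ − ε̄) (i.e., Ξ_{δ−ε̄, ε/2}(D,D) holds). -/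
open MeasureTheory Set ENNReal

/-- The relation `Ξ_{δ,ε}(X,Y)`: for every `Z` of Lebesgue (outer) measure less than `ε`,
`H^r(X ∩ Y \ Z) > H^r(Y) − δ` (phrased additively to avoid truncated subtraction). -/
def Xi (r δ ε : ℝ) (X Y : Set ℝ) : Prop :=
  ∀ Z : Set ℝ, volume Z < ENNReal.ofReal ε →
    Hcap r Y < Hcap r ((X ∩ Y) \ Z) + ENNReal.ofReal δ


lemma Hcap_le_cover {r : ℝ} {X : Set ℝ} (I : ℕ → Set ℝ)
    (h1 : ∀ i, ∃ a b : ℝ, I i = Set.Icc a b) (h2 : X ⊆ ⋃ i, I i) :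
    Hcap r X ≤ ∑' i, (volume (I i)) ^ r := by
  exact iInf_le_of_le I (iInf_le_of_le h1 (iInf_le _ h2))

lemma exists_cover_of_lt {r : ℝ} {X : Set ℝ} {c : ℝ≥0∞} (h : Hcap r X < c) :
    ∃ I : ℕ → Set ℝ, (∀ i, ∃ a b : ℝ, I i = Set.Icc a b) ∧ X ⊆ ⋃ i, I i ∧
      ∑' i, (volume (I i)) ^ r < c := by
  simp only [Hcap, iInf_lt_iff] at h
  obtain ⟨I, h1, h2, hc⟩ := h
  exact ⟨I, h1, h2, hc⟩

lemma Hcap_le_one {r : ℝ} (hr0 : 0 < r) {X : Set ℝ} (hX : X ⊆ Set.Icc 0 1) :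
    Hcap r X ≤ 1 := by
  have := Hcap_le_cover (r := r) (X := X)
    (fun i => if i = 0 then Set.Icc 0 1 else Set.Icc 0 0)
    (fun i => by by_cases h : i = 0 <;> simp only [h, if_true, if_false] <;>
      [exact ⟨0,1,rfl⟩; exact ⟨0,0,rfl⟩])
    (by intro x hx; exact Set.mem_iUnion.2 ⟨0, by simpa using hX hx⟩)
  refine this.trans ?_
  rw [tsum_eq_single 0 (fun b hb => by simp [hb, ENNReal.zero_rpow_of_pos hr0])]
  simp

lemma cover_bound {r : ℝ} (hr0 : 0 < r) (hr1 : r < 1)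
    {D : Set ℝ} (hD : D ⊆ Set.Icc 0 1) {δ ε θ : ℝ} (hε : 0 < ε)
    (hθ0 : 0 < θ) (hθε : θ ≤ ε/8) (hθ2 : θ ≤ 1/2)
    (hXi : Xi r δ ε D D) (Z : Set ℝ) (hZ : volume Z < ENNReal.ofReal (ε/2))
    (I : ℕ → Set ℝ) (h1 : ∀ i, ∃ a b : ℝ, I i = Set.Icc a b) (h2 : D \ Z ⊆ ⋃ i, I i) :
    Hcap r D < (ENNReal.ofReal (1-θ))^r * (∑' i, (volume (I i))^r) + ENNReal.ofReal δ := by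
  set k : ℝ≥0∞ := (ENNReal.ofReal (1-θ))^r with hk
  set c : ℝ≥0∞ := ∑' i, (volume (I i))^r with hc
  have hkhalf : (2:ℝ≥0∞)⁻¹ ≤ k := by
    have h1 : (2:ℝ≥0∞)⁻¹ ≤ ENNReal.ofReal (1-θ) := by
      rw [show ((2:ℝ≥0∞)⁻¹) = ENNReal.ofReal (1/2) by
        rw [ENNReal.ofReal_div_of_pos (by norm_num)]; simp]
      exact ENNReal.ofReal_le_ofReal (by linarith)
    calc (2:ℝ≥0∞)⁻¹ = ((2:ℝ≥0∞)⁻¹)^(1:ℝ) := by rw [ENNReal.rpow_one]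
    _ ≤ ((2:ℝ≥0∞)⁻¹)^r := ENNReal.rpow_le_rpow_of_exponent_ge (by simp) hr1.le
    _ ≤ k := ENNReal.rpow_le_rpow h1 hr0.le
  by_cases hc4 : 4 ≤ c
  · have hH1 : Hcap r D ≤ 1 := Hcap_le_one hr0 hD
    have : (2:ℝ≥0∞) ≤ k * c := by
      calc (2:ℝ≥0∞) = 2⁻¹ * 4 := by
            rw [show (4:ℝ≥0∞) = 2*2 by norm_num, ← mul_assoc,
              ENNReal.inv_mul_cancel (by norm_num) (by norm_num), one_mul]
      _ ≤ k * c := mul_le_mul' hkhalf hc4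
    calc Hcap r D ≤ 1 := hH1
    _ < 2 := by norm_num
    _ ≤ k * c := this
    _ ≤ k * c + ENNReal.ofReal δ := le_self_add
  · push_neg at hc4
    choose a b hab using h1
    set a' : ℕ → ℝ := fun i => max (a i) 0 with ha'
    set b' : ℕ → ℝ := fun i => min (b i) 1 with hb'
    set l : ℕ → ℝ := fun i => b' i - a' i with hl
    set J : ℕ → Set ℝ := fun i => Set.Icc (a' i) (b' i) with hJ
    set K : ℕ → Set ℝ := fun i => Set.Icc (a' i) (b' i - θ * l i) with hK
    set E : ℕ → Set ℝ := fun i => Set.Icc (b' i - θ * l i) (b' i) with hE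
    have volJ : ∀ i, volume (J i) = ENNReal.ofReal (l i) := fun i => by
      rw [hJ]; exact Real.volume_Icc
    have volK : ∀ i, volume (K i) = ENNReal.ofReal ((1-θ) * l i) := fun i => by
      rw [hK]; rw [Real.volume_Icc]; congr 1; simp only [hl]; ring
    have volE : ∀ i, volume (E i) = ENNReal.ofReal (θ * l i) := fun i => by
      rw [hE]; rw [Real.volume_Icc]; ring_nf
    have hJI : ∀ i, J i ⊆ I i := fun i => by
      rw [hJ, hab i]; exact Set.Icc_subset_Icc (le_max_left _ _) (min_le_left _ _)
    have sumJ_le : ∑' i, (volume (J i))^r ≤ c := by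
      refine ENNReal.tsum_le_tsum fun i => ?_
      exact ENNReal.rpow_le_rpow (measure_mono (hJI i)) hr0.le
    have lenJ_le : ∑' i, volume (J i) ≤ ∑' i, (volume (J i))^r := by
      refine ENNReal.tsum_le_tsum fun i => ?_
      have hx1 : volume (J i) ≤ 1 := by
        rw [volJ i]
        refine ENNReal.ofReal_le_one.2 ?_
        simp only [hl, hb', ha']
        have := min_le_right (b i) 1
        have := le_max_right (a i) 0
        linarith
      calc volume (J i) = (volume (J i))^(1:ℝ) := by rw [ENNReal.rpow_one]
      _ ≤ (volume (J i))^r := ENNReal.rpow_le_rpow_of_exponent_ge hx1 hr1.le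
    have sumE : volume (⋃ i, E i) ≤ ENNReal.ofReal θ * c := by
      calc volume (⋃ i, E i) ≤ ∑' i, volume (E i) := measure_iUnion_le _
      _ = ENNReal.ofReal θ * ∑' i, volume (J i) := by
          rw [← ENNReal.tsum_mul_left]
          exact tsum_congr fun i => by
            rw [volE i, volJ i, ENNReal.ofReal_mul hθ0.le]
      _ ≤ ENNReal.ofReal θ * c :=
          mul_le_mul_of_nonneg_left (lenJ_le.trans sumJ_le) zero_le
    set Z' := Z ∪ ⋃ i, E i with hZ'
    have hZ'vol : volume Z' < ENNReal.ofReal ε := by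
      calc volume Z' ≤ volume Z + volume (⋃ i, E i) := measure_union_le _ _
      _ < ENNReal.ofReal (ε/2) + ENNReal.ofReal (ε/2) := by
          refine ENNReal.add_lt_add hZ ?_
          calc volume (⋃ i, E i) ≤ ENNReal.ofReal θ * c := sumE
          _ ≤ ENNReal.ofReal (ε/8) * c :=
              mul_le_mul_of_nonneg_right (ENNReal.ofReal_le_ofReal hθε) zero_le
          _ < ENNReal.ofReal (ε/8) * 4 := by
              refine ENNReal.mul_lt_mul_right ?_ ?_ hc4
              · exact (ENNReal.ofReal_pos.2 (by linarith)).ne'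
              · exact ENNReal.ofReal_ne_top
          _ = ENNReal.ofReal (ε/2) := by
              rw [show (4:ℝ≥0∞) = ENNReal.ofReal 4 by simp,
                ← ENNReal.ofReal_mul (by linarith)]
              congr 1; ring
      _ = ENNReal.ofReal ε := by rw [← ENNReal.ofReal_add (by linarith) (by linarith)]; congr 1; ring
    have hmain := hXi Z' hZ'vol
    rw [Set.inter_self] at hmain
    have hcov : D \ Z' ⊆ ⋃ i, K i := by
      intro x hx
      obtain ⟨hxD, hxZ'⟩ := hx
      have hxZ : x ∉ Z := fun h => hxZ' (Or.inl h)
      have hxE : ∀ i, x ∉ E i := fun i h => hxZ' (Or.inr (Set.mem_iUnion.2 ⟨i, h⟩))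
      obtain ⟨i, hxI⟩ := Set.mem_iUnion.1 (h2 ⟨hxD, hxZ⟩)
      rw [hab i] at hxI
      have hx01 := hD hxD
      have hxJ : x ∈ J i := ⟨max_le hxI.1 hx01.1, le_min hxI.2 hx01.2⟩
      rcases le_or_gt x (b' i - θ * l i) with h | h
      · exact Set.mem_iUnion.2 ⟨i, hxJ.1, h⟩
      · exact absurd ⟨h.le, hxJ.2⟩ (hxE i)
    have hKIcc : ∀ i, ∃ u v : ℝ, K i = Set.Icc u v := fun i => ⟨_, _, rfl⟩
    have hbound : Hcap r (D \ Z') ≤ k * c := by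
      calc Hcap r (D \ Z') ≤ ∑' i, (volume (K i))^r := Hcap_le_cover K hKIcc hcov
      _ = k * ∑' i, (volume (J i))^r := by
          rw [← ENNReal.tsum_mul_left]
          refine tsum_congr fun i => ?_
          rw [volK i, volJ i, ENNReal.ofReal_mul (by linarith),
            ENNReal.mul_rpow_of_nonneg _ _ hr0.le]
      _ ≤ k * c := mul_le_mul_of_nonneg_left sumJ_le zero_le
    calc Hcap r D < Hcap r (D \ Z') + ENNReal.ofReal δ := hmain
    _ ≤ k * c + ENNReal.ofReal δ := by gcongr

theorem Xi_improve (r : ℝ) (hr0 : 0 < r) (hr1 : r < 1)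
    (D : Set ℝ) (hD : D ⊆ Set.Icc 0 1) (δ ε : ℝ) (hδ : 0 < δ) (hε : 0 < ε)
    (hδH : ENNReal.ofReal δ < Hcap r D) (hXi : Xi r δ ε D D) :
    ∃ εbar > 0, Xi r (δ - εbar) (ε / 2) D D := by
  set θ : ℝ := min (ε/8) (1/2) with hθ
  have hθ0 : 0 < θ := lt_min (by linarith) (by norm_num)
  have hθε : θ ≤ ε/8 := min_le_left _ _
  have hθ2 : θ ≤ 1/2 := min_le_right _ _
  set k' : ℝ := (1-θ) ^ r with hk'
  have h1θ : 0 < 1 - θ := by linarith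
  have hk'0 : 0 < k' := Real.rpow_pos_of_pos h1θ r
  have hk'1 : k' < 1 := Real.rpow_lt_one h1θ.le (by linarith) hr0
  have hkeq : (ENNReal.ofReal (1-θ))^r = ENNReal.ofReal k' :=
    ENNReal.ofReal_rpow_of_pos h1θ
  have hHtop : Hcap r D ≠ ∞ :=
    (lt_of_le_of_lt (Hcap_le_one hr0 hD) ENNReal.one_lt_top).ne
  have hδH' : δ < (Hcap r D).toReal := by
    have := (ENNReal.toReal_lt_toReal ENNReal.ofReal_ne_top hHtop).2 hδH
    rwa [ENNReal.toReal_ofReal hδ.le] at this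
  set h : ℝ := (Hcap r D).toReal - δ with hh
  have hpos : 0 < h := by linarith
  have hHeq : Hcap r D = ENNReal.ofReal (h + δ) := by
    rw [hh, sub_add_cancel, ENNReal.ofReal_toReal hHtop]
  -- key lower bound
  have KEY : ∀ Z : Set ℝ, volume Z < ENNReal.ofReal (ε/2) →
      ENNReal.ofReal (h/k') ≤ Hcap r (D \ Z) := by
    intro Z hZ
    by_contra hcon
    push_neg at hcon
    rw [ENNReal.ofReal_div_of_pos hk'0] at hcon
    obtain ⟨I, h1, h2, hc⟩ := exists_cover_of_lt hcon
    have hb := cover_bound hr0 hr1 hD hε hθ0 hθε hθ2 hXi Z hZ I h1 h2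
    rw [hkeq] at hb
    have hkc : ENNReal.ofReal k' * (∑' i, (volume (I i))^r) < ENNReal.ofReal h :=
      ENNReal.mul_lt_of_lt_div' hc
    have : Hcap r D < Hcap r D := by
      calc Hcap r D < ENNReal.ofReal k' * (∑' i, (volume (I i))^r) + ENNReal.ofReal δ := hb
      _ < ENNReal.ofReal h + ENNReal.ofReal δ :=
          ENNReal.add_lt_add_right ENNReal.ofReal_ne_top hkc
      _ = ENNReal.ofReal (h + δ) := (ENNReal.ofReal_add hpos.le hδ.le).symm
      _ = Hcap r D := hHeq.symm
    exact absurd this (lt_irrefl _)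
  -- choose εbar
  set g : ℝ := h * (1/k' - 1) with hg
  have hg0 : 0 < g := by
    have : 1 < 1/k' := (one_lt_div hk'0).2 hk'1
    have : 0 < 1/k' - 1 := by linarith
    positivity
  refine ⟨min (g/2) (δ/2), lt_min (by linarith) (by linarith), ?_⟩
  intro Z hZ
  rw [Set.inter_self]
  set εb : ℝ := min (g/2) (δ/2) with hεb
  have hεb0 : 0 < εb := lt_min (by linarith) (by linarith)
  have hεbg : εb ≤ g/2 := min_le_left _ _
  have hεbδ : εb ≤ δ/2 := min_le_right _ _
  have hlow := KEY Z hZ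
  have hfin : Hcap r D < ENNReal.ofReal (h/k') + ENNReal.ofReal (δ - εb) := by
    rw [hHeq, ← ENNReal.ofReal_add (by positivity) (by linarith)]
    refine (ENNReal.ofReal_lt_ofReal_iff (by have := div_pos hpos hk'0; linarith)).2 ?_
    have hdiv : h / k' = h * (1/k') := by rw [div_eq_mul_inv, one_div]
    have hring : h * (1/k') - h = g := by rw [hg]; ring
    linarith
  exact hfin.trans_le (by gcongr)
end
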